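/- Fix t > 0 with t not an integer, write t = T + τ where T = ⌊t⌋ is a nonnegative integer and τ ∈ (0, 1), and fix a > 0. Let n ∈ ℕ, y₁, …, yₙ ∈ ℝ, c₁, …, cₙ ∈ ℝ satisfy the moment conditions ∑_{j=1}^n c_j · y_j^ℓ = 0 for every integer ℓ with 0 ≤ ℓ ≤ T (where x^t for x ≥ 0 denotes the real power with the convention 0^t = 0). Then the quantity −a · ∑_{j=1}^n ∑_{k=1}^n c_j · c_k · (y_j² + y_k²)^t is nonnegative if T is even and nonpositive if T is odd. -/

import Mathlib

open Finset Real MeasureTheory Set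

noncomputable def gg (T : ℕ) (w : ℝ) : ℝ :=
  Real.exp (-w) - ∑ m ∈ Finset.range (T + 1), (-w) ^ m / m.factorial

lemma gg_zero (T : ℕ) : gg T 0 = 0 := by
  simp [gg, Finset.sum_range_succ']

lemma gg_cont (T : ℕ) : Continuous (gg T) := by
  unfold gg; fun_prop

lemma gg_hasDeriv (T : ℕ) (w : ℝ) : HasDerivAt (gg (T + 1)) (-(gg T w)) w := by
  have h1 : ∀ m : ℕ, HasDerivAt (fun w : ℝ => (-w) ^ m / m.factorial)
      ((-1) ^ m * (m * w ^ (m - 1)) / m.factorial) w := by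
    intro m
    have he : (fun w : ℝ => (-w) ^ m / m.factorial)
        = fun w : ℝ => (-1) ^ m * w ^ m / m.factorial := by
      funext w; rw [neg_pow]
    rw [he]
    exact ((hasDerivAt_pow m w).const_mul _).div_const _
  have hsum : HasDerivAt (fun w : ℝ => ∑ m ∈ Finset.range (T + 2), (-w) ^ m / m.factorial)
      (∑ m ∈ Finset.range (T + 2), (-1) ^ m * (m * w ^ (m - 1)) / m.factorial) w :=
    HasDerivAt.fun_sum fun m _ => h1 m
  have hexp : HasDerivAt (fun w : ℝ => Real.exp (-w)) (Real.exp (-w) * (-1)) w :=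
    (hasDerivAt_neg w).exp
  have := hexp.fun_sub hsum
  refine this.congr_deriv ?_
  have : ∑ m ∈ Finset.range (T + 2), (-1 : ℝ) ^ m * (m * w ^ (m - 1)) / m.factorial
      = ∑ k ∈ Finset.range (T + 1), -((-w) ^ k / k.factorial) := by
    rw [Finset.sum_range_succ']
    simp only [Nat.cast_zero, pow_zero, zero_mul, mul_zero, zero_div, add_zero]
    refine Finset.sum_congr rfl fun k _ => ?_
    have hk : (Nat.factorial (k + 1) : ℝ) = (k + 1) * Nat.factorial k := by
      push_cast [Nat.factorial_succ]; ring
    rw [hk, neg_pow, Nat.add_sub_cancel]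
    have h0 : (Nat.factorial k : ℝ) ≠ 0 := Nat.cast_ne_zero.mpr (Nat.factorial_ne_zero k)
    have h1 : ((k : ℝ) + 1) ≠ 0 := by positivity
    field_simp
    push_cast
    ring
  rw [this, gg]
  simp [Finset.sum_neg_distrib]
  ring

lemma gg_sign : ∀ T : ℕ, ∀ w : ℝ, 0 < w → 0 < (-1 : ℝ) ^ (T + 1) * gg T w := by
  intro T
  induction T with
  | zero =>
    intro w hw
    have h : gg 0 w = Real.exp (-w) - 1 := by simp [gg]
    have : Real.exp (-w) < 1 := Real.exp_lt_one_iff.mpr (by linarith)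
    rw [h]; simp; linarith
  | succ T ih =>
    intro w hw
    set f : ℝ → ℝ := fun w => (-1 : ℝ) ^ (T + 2) * gg (T + 1) w with hf
    have hderiv : ∀ x : ℝ, HasDerivAt f ((-1 : ℝ) ^ (T + 1) * gg T x) x := by
      intro x
      have := (gg_hasDeriv T x).const_mul ((-1 : ℝ) ^ (T + 2))
      refine this.congr_deriv ?_
      ring
    have hmono : StrictMonoOn f (Set.Ici 0) := by
      apply strictMonoOn_of_deriv_pos (convex_Ici 0)
      · exact (continuous_const.mul (gg_cont (T + 1))).continuousOn
      · intro x hx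
        rw [interior_Ici] at hx
        rw [(hderiv x).deriv]
        exact ih x hx
    have h0 : f 0 = 0 := by simp [hf, gg_zero]
    have := hmono (Set.self_mem_Ici) (Set.mem_Ici.mpr hw.le) hw
    rw [h0] at this
    simpa [hf] using this

lemma gg_bound (T : ℕ) {w : ℝ} (hw : |w| ≤ 1) :
    |gg T w| ≤ |w| ^ (T + 1) * ((T + 2) / ((T + 1).factorial * (T + 1))) := by
  have := Real.exp_bound (x := -w) (by rwa [abs_neg]) (n := T + 1) (Nat.succ_pos T)
  rw [abs_neg] at this
  unfold gg
  refine this.trans_eq ?_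
  push_cast
  ring

lemma contOn_aux (t : ℝ) (T : ℕ) (s : Set ℝ) (hs : ∀ u ∈ s, u ≠ 0) :
    ContinuousOn (fun u : ℝ => gg T u * u ^ (-t - 1)) s := by
  refine ContinuousOn.mul (gg_cont T).continuousOn ?_
  intro u hu
  exact (Real.continuousAt_rpow_const u _ (Or.inl (hs u hu))).continuousWithinAt

lemma gg_intOn (t : ℝ) (T : ℕ) (τ : ℝ) (hτ0 : 0 < τ) (hτ1 : τ < 1)
    (htsum : t = (T : ℝ) + τ) :
    IntegrableOn (fun u => gg T u * u ^ (-t - 1)) (Ioi (0 : ℝ)) := by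
  have hT : (T : ℝ) < t := by rw [htsum]; linarith
  have hA : IntegrableOn (fun u => gg T u * u ^ (-t - 1)) (Ioc (0 : ℝ) 1) := by
    set C : ℝ := ((T : ℝ) + 2) / ((T + 1).factorial * (T + 1)) with hC
    have hC0 : 0 ≤ C := by positivity
    have gdom : IntegrableOn (fun u : ℝ => C * u ^ ((T : ℝ) - t)) (Ioc (0 : ℝ) 1) := by
      have h1 : (-1 : ℝ) < (T : ℝ) - t := by rw [htsum]; linarith
      have := (intervalIntegral.intervalIntegrable_rpow' (a := 0) (b := 1) h1).const_mul C
      rwa [intervalIntegrable_iff_integrableOn_Ioc_of_le (by norm_num : (0:ℝ) ≤ 1)] at this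
    refine Integrable.mono gdom ?_ ?_
    · exact (contOn_aux t T _ fun u hu => ne_of_gt hu.1).aestronglyMeasurable measurableSet_Ioc
    · refine (ae_restrict_iff' measurableSet_Ioc).mpr (Filter.Eventually.of_forall ?_)
      intro u hu
      have hu0 : 0 < u := hu.1
      have hrp : (0:ℝ) ≤ u ^ (-t - 1) := Real.rpow_nonneg hu0.le _
      have hb := gg_bound T (w := u) (by rw [abs_of_pos hu0]; exact hu.2)
      rw [abs_of_pos hu0] at hb
      have key : u ^ (T + 1) * u ^ (-t - 1) = u ^ ((T : ℝ) - t) := by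
        rw [← Real.rpow_natCast u (T + 1), ← Real.rpow_add hu0]
        push_cast; ring_nf
      calc ‖gg T u * u ^ (-t - 1)‖ = |gg T u| * u ^ (-t - 1) := by
            rw [norm_mul, Real.norm_eq_abs, Real.norm_eq_abs, abs_of_nonneg hrp]
        _ ≤ (u ^ (T + 1) * C) * u ^ (-t - 1) := by
            apply mul_le_mul_of_nonneg_right hb hrp
        _ = C * (u ^ ((T : ℝ) - t)) := by rw [← key]; ring
        _ ≤ ‖C * u ^ ((T : ℝ) - t)‖ := le_abs_self _
  have hB : IntegrableOn (fun u => gg T u * u ^ (-t - 1)) (Ioi (1 : ℝ)) := by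
    have i1 : IntegrableOn (fun u : ℝ => Real.exp (-u) * u ^ (-t - 1)) (Ioi (1 : ℝ)) := by
      refine Integrable.mono (exp_neg_integrableOn_Ioi 1 (one_pos : (0:ℝ) < 1)) ?_ ?_
      · refine ContinuousOn.aestronglyMeasurable ?_ measurableSet_Ioi
        refine ContinuousOn.mul (by fun_prop) ?_
        intro u hu
        exact (Real.continuousAt_rpow_const u _
          (Or.inl (ne_of_gt (lt_trans one_pos hu)))).continuousWithinAt
      · refine (ae_restrict_iff' measurableSet_Ioi).mpr (Filter.Eventually.of_forall ?_)
        intro u hu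
        have hu1 : (1 : ℝ) ≤ u := le_of_lt hu
        have h2 : u ^ (-t - 1) ≤ 1 :=
          Real.rpow_le_one_of_one_le_of_nonpos hu1 (by linarith)
        have h3 : (0:ℝ) ≤ u ^ (-t - 1) := Real.rpow_nonneg (by linarith) _
        rw [norm_mul, Real.norm_eq_abs, Real.norm_eq_abs, abs_of_nonneg h3,
          abs_of_pos (Real.exp_pos _), norm_eq_abs, abs_of_pos (by positivity : (0:ℝ) < Real.exp (-1 * u))]
        calc Real.exp (-u) * u ^ (-t-1) ≤ Real.exp (-u) * 1 :=
              mul_le_mul_of_nonneg_left h2 (Real.exp_pos _).le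
          _ = Real.exp (-1 * u) := by rw [mul_one, neg_one_mul]
    have i2 : ∀ m ∈ Finset.range (T + 1),
        IntegrableOn (fun u : ℝ => ((-1:ℝ) ^ m / m.factorial) * u ^ ((m : ℝ) - t - 1))
          (Ioi (1 : ℝ)) := by
      intro m hm
      have hmT : (m : ℝ) ≤ T := by
        exact_mod_cast Nat.lt_succ_iff.mp (Finset.mem_range.mp hm)
      exact (integrableOn_Ioi_rpow_of_lt (by linarith) one_pos).const_mul _
    have hsum := integrable_finset_sum (μ := volume.restrict (Ioi (1:ℝ)))
      (Finset.range (T + 1)) i2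
    refine IntegrableOn.congr_fun (i1.sub hsum) ?_ measurableSet_Ioi
    intro u hu
    have hu0 : (0 : ℝ) < u := lt_trans one_pos hu
    simp only [gg, sub_mul, Finset.sum_mul, Pi.sub_apply]
    congr 1
    refine Finset.sum_congr rfl fun m _ => ?_
    have : u ^ ((m : ℝ) - t - 1) = u ^ m * u ^ (-t - 1) := by
      rw [← Real.rpow_natCast u m, ← Real.rpow_add hu0]
      ring_nf
    rw [this, neg_pow]
    ring
  have := hA.union hB
  rwa [Set.Ioc_union_Ioi_eq_Ioi (by norm_num : (0:ℝ) ≤ 1)] at this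

lemma gg_intOn_s (t : ℝ) (T : ℕ) (τ : ℝ) (hτ0 : 0 < τ) (hτ1 : τ < 1)
    (htsum : t = (T : ℝ) + τ) {s : ℝ} (hs : 0 ≤ s) :
    IntegrableOn (fun u => gg T (s * u) * u ^ (-t - 1)) (Ioi (0 : ℝ)) := by
  rcases eq_or_lt_of_le hs with h | h
  · have : (fun u : ℝ => gg T (s * u) * u ^ (-t - 1)) = fun _ => 0 := by
      funext u; rw [← h, zero_mul, gg_zero, zero_mul]
    rw [this]
    exact integrableOn_zero
  · have base := gg_intOn t T τ hτ0 hτ1 htsum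
    have hcomp : IntegrableOn (fun u => gg T (s * u) * (s * u) ^ (-t - 1)) (Ioi (0 : ℝ)) := by
      have := (integrableOn_Ioi_comp_mul_left_iff
        (fun v => gg T v * v ^ (-t - 1)) 0 h).mpr (by rwa [mul_zero])
      exact this
    have := hcomp.const_mul (s ^ (t + 1))
    refine IntegrableOn.congr_fun this ?_ measurableSet_Ioi
    intro u hu
    have hu0 : (0 : ℝ) < u := hu
    have hmul : (s * u) ^ (-t - 1) = s ^ (-t - 1) * u ^ (-t - 1) :=
      Real.mul_rpow h.le hu0.le
    have hss : s ^ (t + 1) * s ^ (-t - 1) = 1 := by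
      rw [← Real.rpow_add h]; norm_num
    show s ^ (t + 1) * (gg T (s * u) * (s * u) ^ (-t - 1)) = gg T (s * u) * u ^ (-t - 1)
    rw [hmul]
    calc s ^ (t + 1) * (gg T (s * u) * (s ^ (-t - 1) * u ^ (-t - 1)))
        = (s ^ (t + 1) * s ^ (-t - 1)) * (gg T (s * u) * u ^ (-t - 1)) := by ring
      _ = gg T (s * u) * u ^ (-t - 1) := by rw [hss, one_mul]

lemma gg_scale (t : ℝ) (ht : 0 < t) (T : ℕ) {s : ℝ} (hs : 0 ≤ s) :
    ∫ u in Ioi (0:ℝ), gg T (s * u) * u ^ (-t - 1)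
      = s ^ t * ∫ u in Ioi (0:ℝ), gg T u * u ^ (-t - 1) := by
  rcases eq_or_lt_of_le hs with h | h
  · rw [← h, Real.zero_rpow (ne_of_gt ht), zero_mul]
    have : (fun u : ℝ => gg T ((0:ℝ) * u) * u ^ (-t - 1)) = fun _ => 0 := by
      funext u; rw [zero_mul, gg_zero, zero_mul]
    rw [this, integral_zero]
  · have key := integral_comp_mul_left_Ioi
      (fun v => gg T v * (v / s) ^ (-t - 1)) 0 h
    rw [mul_zero] at key
    have lhs_eq : ∫ u in Ioi (0:ℝ), gg T (s * u) * u ^ (-t - 1)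
        = ∫ u in Ioi (0:ℝ), gg T (s * u) * ((s * u) / s) ^ (-t - 1) := by
      congr 1
      funext u
      rw [mul_div_cancel_left₀ _ (ne_of_gt h)]
    rw [lhs_eq, key]
    have rhs_eq : ∫ v in Ioi (0:ℝ), gg T v * (v / s) ^ (-t - 1)
        = ∫ v in Ioi (0:ℝ), (gg T v * v ^ (-t - 1)) * s ^ (t + 1) := by
      refine setIntegral_congr_fun measurableSet_Ioi fun v hv => ?_
      have hv0 : (0:ℝ) < v := hv
      rw [Real.div_rpow hv0.le h.le]
      rw [div_eq_mul_inv, ← Real.rpow_neg h.le]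
      have : -(-t - 1) = t + 1 := by ring
      rw [this]; ring
    rw [rhs_eq, integral_mul_const, smul_eq_mul]
    have : s⁻¹ * s ^ (t + 1) = s ^ t := by
      rw [Real.rpow_add h, Real.rpow_one]
      field_simp
    calc s⁻¹ * ((∫ v in Ioi (0:ℝ), gg T v * v ^ (-t - 1)) * s ^ (t + 1))
        = (s⁻¹ * s ^ (t + 1)) * ∫ v in Ioi (0:ℝ), gg T v * v ^ (-t - 1) := by ring
      _ = s ^ t * ∫ v in Ioi (0:ℝ), gg T v * v ^ (-t - 1) := by rw [this]

lemma K_sign (t : ℝ) (T : ℕ) (τ : ℝ) (hτ0 : 0 < τ) (hτ1 : τ < 1)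
    (htsum : t = (T : ℝ) + τ) :
    0 < (-1 : ℝ) ^ (T + 1) * ∫ u in Ioi (0:ℝ), gg T u * u ^ (-t - 1) := by
  have base := gg_intOn t T τ hτ0 hτ1 htsum
  rw [← integral_const_mul]
  set f₂ : ℝ → ℝ := fun u => (-1 : ℝ) ^ (T + 1) * (gg T u * u ^ (-t - 1)) with hf₂
  have hpos : ∀ u ∈ Ioi (0:ℝ), 0 < f₂ u := by
    intro u hu
    have hu0 : (0:ℝ) < u := hu
    have h1 := gg_sign T u hu0
    have h2 : (0:ℝ) < u ^ (-t - 1) := Real.rpow_pos_of_pos hu0 _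
    calc (0:ℝ) < ((-1:ℝ)^(T+1) * gg T u) * u ^ (-t - 1) := mul_pos h1 h2
      _ = f₂ u := by rw [hf₂]; ring
  rw [setIntegral_pos_iff_support_of_nonneg_ae]
  · refine lt_of_lt_of_le ?_ (measure_mono
      (fun u hu => ⟨ne_of_gt (hpos u hu), hu⟩ : Ioi (0:ℝ) ⊆ Function.support f₂ ∩ Ioi 0))
    rw [Real.volume_Ioi]
    simp
  · exact (ae_restrict_iff' measurableSet_Ioi).mpr
      (Filter.Eventually.of_forall fun u hu => (hpos u hu).le)
  · exact base.const_mul _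

lemma mom2 (T n : ℕ) (y c : Fin n → ℝ)
    (hmom : ∀ ℓ : ℕ, ℓ ≤ T → ∑ j, c j * y j ^ ℓ = 0) :
    ∀ m : ℕ, m ≤ T → ∑ j, ∑ k, c j * c k * (y j ^ 2 + y k ^ 2) ^ m = 0 := by
  intro m hm
  have h1 : ∀ j k : Fin n, c j * c k * (y j ^ 2 + y k ^ 2) ^ m
      = ∑ i ∈ Finset.range (m+1),
          (m.choose i : ℝ) * (c j * (y j ^ 2) ^ i) * (c k * (y k ^ 2) ^ (m - i)) := by
    intro j k
    rw [add_pow, Finset.mul_sum]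
    exact Finset.sum_congr rfl fun i _ => by ring
  simp_rw [h1]
  have h2 : ∑ j : Fin n, ∑ k : Fin n, ∑ i ∈ Finset.range (m+1),
        (m.choose i : ℝ) * (c j * (y j ^ 2) ^ i) * (c k * (y k ^ 2) ^ (m - i))
      = ∑ i ∈ Finset.range (m+1), ∑ j : Fin n, ∑ k : Fin n,
        (m.choose i : ℝ) * (c j * (y j ^ 2) ^ i) * (c k * (y k ^ 2) ^ (m - i)) := by
    calc ∑ j : Fin n, ∑ k : Fin n, ∑ i ∈ Finset.range (m+1),
          (m.choose i : ℝ) * (c j * (y j ^ 2) ^ i) * (c k * (y k ^ 2) ^ (m - i))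
        = ∑ j : Fin n, ∑ i ∈ Finset.range (m+1), ∑ k : Fin n,
          (m.choose i : ℝ) * (c j * (y j ^ 2) ^ i) * (c k * (y k ^ 2) ^ (m - i)) :=
          Finset.sum_congr rfl fun j _ => Finset.sum_comm
      _ = _ := Finset.sum_comm
  rw [h2]
  refine Finset.sum_eq_zero fun i hi => ?_
  have hi' : i ≤ m := Nat.lt_succ_iff.mp (Finset.mem_range.mp hi)
  have h3 : (m.choose i : ℝ) * ((∑ j, c j * y j ^ (2*i)) * (∑ k, c k * y k ^ (2*(m-i))))
      = ∑ j : Fin n, ∑ k : Fin n,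
          (m.choose i : ℝ) * (c j * (y j ^ 2) ^ i) * (c k * (y k ^ 2) ^ (m - i)) := by
    rw [Finset.sum_mul_sum, Finset.mul_sum]
    refine Finset.sum_congr rfl fun j _ => ?_
    rw [Finset.mul_sum]
    refine Finset.sum_congr rfl fun k _ => ?_
    rw [← pow_mul, ← pow_mul]
    ring
  rw [← h3]
  by_cases hcase : 2 * i ≤ T
  · rw [hmom (2 * i) hcase]
    ring
  · rw [hmom (2 * (m - i)) (by omega)]
    ring

theorem stmt14 (t : ℝ) (ht : 0 < t) (T : ℕ) (τ : ℝ) (hτ : τ ∈ Set.Ioo (0 : ℝ) 1)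
    (htsum : t = (T : ℝ) + τ) (a : ℝ) (ha : 0 < a)
    (n : ℕ) (y c : Fin n → ℝ)
    (hmom : ∀ ℓ : ℕ, ℓ ≤ T → ∑ j, c j * y j ^ ℓ = 0) :
    (Even T → 0 ≤ -a * ∑ j, ∑ k, c j * c k * (((y j) ^ 2 + (y k) ^ 2 : ℝ) ^ t)) ∧
    (Odd T → -a * ∑ j, ∑ k, c j * c k * (((y j) ^ 2 + (y k) ^ 2 : ℝ) ^ t) ≤ 0) := by
  obtain ⟨hτ0, hτ1⟩ := hτ
  set K : ℝ := ∫ u in Ioi (0:ℝ), gg T u * u ^ (-t - 1) with hK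
  set S : ℝ := ∑ j, ∑ k, c j * c k * (((y j) ^ 2 + (y k) ^ 2 : ℝ) ^ t) with hS
  have hsnn : ∀ j k : Fin n, (0:ℝ) ≤ y j ^ 2 + y k ^ 2 := fun j k => by positivity
  -- S * K = ∫ (Q u)² u^(-t-1) ≥ 0
  have hSK : 0 ≤ S * K := by
    have hrep : ∀ j k : Fin n, c j * c k * (((y j) ^ 2 + (y k) ^ 2 : ℝ) ^ t) * K
        = ∫ u in Ioi (0:ℝ), c j * c k * (gg T ((y j ^ 2 + y k ^ 2) * u) * u ^ (-t - 1)) := by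
      intro j k
      rw [integral_const_mul, gg_scale t ht T (hsnn j k), ← hK]
      ring
    have hint : ∀ j k : Fin n, IntegrableOn
        (fun u => c j * c k * (gg T ((y j ^ 2 + y k ^ 2) * u) * u ^ (-t - 1))) (Ioi (0:ℝ)) :=
      fun j k => (gg_intOn_s t T τ hτ0 hτ1 htsum (hsnn j k)).const_mul _
    have hswap : S * K = ∫ u in Ioi (0:ℝ),
        ∑ j, ∑ k, c j * c k * (gg T ((y j ^ 2 + y k ^ 2) * u) * u ^ (-t - 1)) := by
      rw [integral_finset_sum _ (fun j _ => integrable_finset_sum _ fun k _ => hint j k)]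
      rw [hS, Finset.sum_mul]
      refine Finset.sum_congr rfl fun j _ => ?_
      rw [Finset.sum_mul, integral_finset_sum _ (fun k _ => hint j k)]
      exact Finset.sum_congr rfl fun k _ => hrep j k
    rw [hswap]
    refine setIntegral_nonneg measurableSet_Ioi fun u hu => ?_
    have hu0 : (0:ℝ) < u := hu
    have hQ : (∑ j, c j * Real.exp (-(y j ^ 2 * u))) ^ 2
        = ∑ j, ∑ k, c j * c k * Real.exp (-((y j ^ 2 + y k ^ 2) * u)) := by
      rw [sq, Finset.sum_mul_sum]
      refine Finset.sum_congr rfl fun j _ => Finset.sum_congr rfl fun k _ => ?_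
      have harg : -(y j ^ 2 * u) + -(y k ^ 2 * u) = -((y j ^ 2 + y k ^ 2) * u) := by ring
      rw [mul_mul_mul_comm, ← Real.exp_add, harg]
    have hP : ∑ j, ∑ k, c j * c k *
          (∑ m ∈ Finset.range (T+1), (-((y j ^ 2 + y k ^ 2) * u)) ^ m / m.factorial) = 0 := by
      have e2 : ∀ j k : Fin n, c j * c k *
            (∑ m ∈ Finset.range (T+1), (-((y j ^ 2 + y k ^ 2) * u)) ^ m / m.factorial)
          = ∑ m ∈ Finset.range (T+1),
              ((-u) ^ m / m.factorial) * (c j * c k * (y j ^ 2 + y k ^ 2) ^ m) := by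
        intro j k
        rw [Finset.mul_sum]
        refine Finset.sum_congr rfl fun m _ => ?_
        rw [show (-((y j ^ 2 + y k ^ 2) * u)) = (-u) * (y j ^ 2 + y k ^ 2) by ring, mul_pow]
        ring
      simp_rw [e2]
      have h2 : ∑ j : Fin n, ∑ k : Fin n, ∑ m ∈ Finset.range (T+1),
            ((-u) ^ m / m.factorial) * (c j * c k * (y j ^ 2 + y k ^ 2) ^ m)
          = ∑ m ∈ Finset.range (T+1), ∑ j : Fin n, ∑ k : Fin n,
            ((-u) ^ m / m.factorial) * (c j * c k * (y j ^ 2 + y k ^ 2) ^ m) := by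
        calc ∑ j : Fin n, ∑ k : Fin n, ∑ m ∈ Finset.range (T+1),
              ((-u) ^ m / m.factorial) * (c j * c k * (y j ^ 2 + y k ^ 2) ^ m)
            = ∑ j : Fin n, ∑ m ∈ Finset.range (T+1), ∑ k : Fin n,
              ((-u) ^ m / m.factorial) * (c j * c k * (y j ^ 2 + y k ^ 2) ^ m) :=
              Finset.sum_congr rfl fun j _ => Finset.sum_comm
          _ = _ := Finset.sum_comm
      rw [h2]
      refine Finset.sum_eq_zero fun m hmr => ?_
      have hmT : m ≤ T := Nat.lt_succ_iff.mp (Finset.mem_range.mp hmr)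
      simp_rw [← Finset.mul_sum]
      rw [mom2 T n y c hmom m hmT]
      ring
    have hpt : ∑ j, ∑ k, c j * c k * (gg T ((y j ^ 2 + y k ^ 2) * u) * u ^ (-t - 1))
        = ((∑ j, c j * Real.exp (-(y j ^ 2 * u))) ^ 2) * u ^ (-t - 1) := by
      have e3 : ∀ j k : Fin n, c j * c k * (gg T ((y j ^ 2 + y k ^ 2) * u) * u ^ (-t - 1))
          = (c j * c k * Real.exp (-((y j ^ 2 + y k ^ 2) * u))
            - c j * c k * (∑ m ∈ Finset.range (T+1),
                (-((y j ^ 2 + y k ^ 2) * u)) ^ m / m.factorial)) * u ^ (-t - 1) := by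
        intro j k
        unfold gg
        ring
      simp_rw [e3, ← Finset.sum_mul]
      congr 1
      rw [hQ]
      calc ∑ j : Fin n, ∑ k : Fin n, (c j * c k * Real.exp (-((y j ^ 2 + y k ^ 2) * u))
            - c j * c k * (∑ m ∈ Finset.range (T+1),
                (-((y j ^ 2 + y k ^ 2) * u)) ^ m / m.factorial))
          = (∑ j : Fin n, ∑ k : Fin n, c j * c k * Real.exp (-((y j ^ 2 + y k ^ 2) * u)))
            - ∑ j : Fin n, ∑ k : Fin n, c j * c k * (∑ m ∈ Finset.range (T+1),
                (-((y j ^ 2 + y k ^ 2) * u)) ^ m / m.factorial) := by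
            rw [← Finset.sum_sub_distrib]
            exact Finset.sum_congr rfl fun j _ => Finset.sum_sub_distrib _ _
        _ = _ := by rw [hP, sub_zero]
    rw [hpt]
    have := sq_nonneg (∑ j, c j * Real.exp (-(y j ^ 2 * u)))
    have h4 : (0:ℝ) ≤ u ^ (-t - 1) := Real.rpow_nonneg hu0.le _
    positivity
  have hK_sign := K_sign t T τ hτ0 hτ1 htsum
  constructor
  · intro hTe
    have h1 : (-1 : ℝ) ^ (T + 1) = -1 := (hTe.add_one).neg_one_pow
    rw [h1] at hK_sign
    have hKneg : K < 0 := by linarith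
    have hSle : S ≤ 0 := by nlinarith
    nlinarith
  · intro hTo
    have h1 : (-1 : ℝ) ^ (T + 1) = 1 := (hTo.add_one).neg_one_pow
    rw [h1, one_mul] at hK_sign
    have hSge : 0 ≤ S := by nlinarith
    nlinarith
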